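/- Let V be an integrable function on [0,1] and let y be the solution of the initial value problem -y'' + V y = 0, y(0) = 0, y'(0) = 1. If V is non-negative almost everywhere, then y(t) ≥ t for all t in [0,1]; in particular y is positive on (0,1]. -/
import Mathlib


open MeasureTheory Set intervalIntegral Real

theorem positivity_of_solution_nonneg_potential
    (V y : ℝ → ℝ)
    (hV : IntegrableOn V (Icc 0 1))
    (hVpos : ∀ᵐ t ∂(volume.restrict (Icc (0:ℝ) 1)), 0 ≤ V t)
    (hy0 : y 0 = 0)
    (hy : ∀ t ∈ Icc (0:ℝ) 1,
      HasDerivWithinAt y (1 + ∫ s in (0:ℝ)..t, V s * y s) (Icc (0:ℝ) 1) t) :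
    ∀ t ∈ Icc (0:ℝ) 1, t ≤ y t ∧ (0 < t → 0 < y t) := by
  have hycont : ContinuousOn y (Icc 0 1) := fun t ht => (hy t ht).continuousWithinAt
  -- Key lemma: if y ≥ 0 on [0,c] then y t ≥ t on [0,c]
  have keyA : ∀ c ∈ Icc (0:ℝ) 1, (∀ u ∈ Icc 0 c, 0 ≤ y u) →
      ∀ t ∈ Icc (0:ℝ) c, t ≤ y t := by
    intro c hc hpos t ht
    have hmono : MonotoneOn (fun t => y t - t) (Icc 0 c) := by
      apply monotoneOn_of_deriv_nonneg (convex_Icc 0 c)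
      · exact (hycont.mono (Icc_subset_Icc_right hc.2)).sub continuousOn_id
      · intro x hx
        rw [interior_Icc] at hx
        have hx1 : x ∈ Icc (0:ℝ) 1 := ⟨hx.1.le, hx.2.le.trans hc.2⟩
        have hnhds : Icc (0:ℝ) 1 ∈ nhds x :=
          Icc_mem_nhds hx.1 (lt_of_lt_of_le hx.2 hc.2)
        have hda : HasDerivAt y (1 + ∫ s in (0:ℝ)..x, V s * y s) x :=
          (hy x hx1).hasDerivAt hnhds
        exact ((hda.sub (hasDerivAt_id x)).differentiableAt).differentiableWithinAt
      · intro x hx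
        rw [interior_Icc] at hx
        have hx1 : x ∈ Icc (0:ℝ) 1 := ⟨hx.1.le, hx.2.le.trans hc.2⟩
        have hnhds : Icc (0:ℝ) 1 ∈ nhds x :=
          Icc_mem_nhds hx.1 (lt_of_lt_of_le hx.2 hc.2)
        have hda : HasDerivAt (fun t => y t - t)
            ((1 + ∫ s in (0:ℝ)..x, V s * y s) - 1) x :=
          ((hy x hx1).hasDerivAt hnhds).sub (hasDerivAt_id x)
        rw [hda.deriv]
        have hint : (0:ℝ) ≤ ∫ s in (0:ℝ)..x, V s * y s := by
          apply intervalIntegral.integral_nonneg_of_ae_restrict hx.1.le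
          have h1 : ∀ᵐ s ∂(volume.restrict (Icc (0:ℝ) x)), 0 ≤ V s :=
            ae_restrict_of_ae_restrict_of_subset
              (Icc_subset_Icc_right (hx.2.le.trans hc.2)) hVpos
          have h2 : ∀ᵐ s ∂(volume.restrict (Icc (0:ℝ) x)), 0 ≤ y s := by
            filter_upwards [ae_restrict_mem measurableSet_Icc] with s hs
            exact hpos s ⟨hs.1, hs.2.trans hx.2.le⟩
          filter_upwards [h1, h2] with s h1 h2
          exact mul_nonneg h1 h2
        linarith
    have hle := hmono ⟨le_refl 0, hc.1⟩ ht ht.1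
    simp only [hy0, sub_zero] at hle
    linarith
  set S : Set ℝ := {t : ℝ | ∀ u ∈ Icc 0 t, u ≤ y u} with hS
  have h0S : (0:ℝ) ∈ S := by
    intro u hu
    have : u = 0 := le_antisymm hu.2 hu.1
    simp [this, hy0]
  have hclosed : IsClosed (S ∩ Icc (0:ℝ) 1) := by
    apply IsSeqClosed.isClosed
    intro f t hf hft
    have htIcc : t ∈ Icc (0:ℝ) 1 :=
      isClosed_Icc.isSeqClosed (fun n => (hf n).2) hft
    refine ⟨?_, htIcc⟩
    intro u hu
    by_cases hcase : ∃ n, u ≤ f n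
    · obtain ⟨n, hn⟩ := hcase
      exact (hf n).1 u ⟨hu.1, hn⟩
    · push_neg at hcase
      have htu : t = u := le_antisymm
        (le_of_tendsto hft (Filter.Eventually.of_forall fun n => (hcase n).le)) hu.2
      have htendS : Filter.Tendsto f Filter.atTop (nhdsWithin t (Icc (0:ℝ) 1)) := by
        rw [tendsto_nhdsWithin_iff]
        exact ⟨hft, Filter.Eventually.of_forall fun n => (hf n).2⟩
      have hyf : Filter.Tendsto (fun n => y (f n)) Filter.atTop (nhds (y t)) :=
        ((hycont t htIcc).tendsto).comp htendS
      have hle : ∀ n, f n ≤ y (f n) := fun n =>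
        (hf n).1 (f n) ⟨(hf n).2.1, le_refl _⟩
      have : t ≤ y t := le_of_tendsto_of_tendsto' hft hyf hle
      rw [← htu] at hu ⊢
      linarith
  have hsubset : Icc (0:ℝ) 1 ⊆ S := by
    apply hclosed.Icc_subset_of_forall_exists_gt h0S
    intro x hx b hb
    obtain ⟨hxS, hx0, hx1⟩ : x ∈ S ∧ 0 ≤ x ∧ x < 1 := ⟨hx.1, hx.2.1, hx.2.2⟩
    -- get δ > 0 such that y ≥ 0 on (x, x+δ) ∩ Icc 0 1
    have hδ : ∃ δ > 0, ∀ u ∈ Icc (0:ℝ) 1, x < u → u < x + δ → 0 ≤ y u := by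
      rcases eq_or_lt_of_le hx0 with hx0' | hx0'
      · -- x = 0 : use the derivative at 0
        subst hx0'
        have hd0 : HasDerivWithinAt y 1 (Icc (0:ℝ) 1) 0 := by
          have := hy 0 ⟨le_refl 0, zero_le_one⟩
          simpa using this
        have hslope := hasDerivWithinAt_iff_tendsto_slope.1 hd0
        have hev : ∀ᶠ u in nhdsWithin 0 (Icc (0:ℝ) 1 \ {0}), 0 < slope y 0 u :=
          hslope.eventually (eventually_gt_nhds one_pos)
        rw [eventually_nhdsWithin_iff] at hev
        rw [Metric.eventually_nhds_iff] at hev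
        obtain ⟨δ, hδpos, hδ⟩ := hev
        refine ⟨δ, hδpos, fun u hu hxu hud => ?_⟩
        have hdist : dist u 0 < δ := by
          rw [Real.dist_eq, abs_of_nonneg (by linarith [hu.1] : (0:ℝ) ≤ u - 0)]
          linarith
        have hsl := hδ hdist ⟨hu, by simp [ne_of_gt hxu]⟩
        rw [slope_def_field] at hsl
        simp only [hy0, sub_zero] at hsl
        have := mul_pos hsl hxu
        rw [div_mul_cancel₀] at this
        · exact this.le
        · exact ne_of_gt hxu
      · -- x > 0 : y x ≥ x > 0, use continuity
        have hyx : 0 < y x := lt_of_lt_of_le hx0' (hxS x ⟨hx0, le_refl x⟩)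
        have hev : ∀ᶠ u in nhdsWithin x (Icc (0:ℝ) 1), 0 < y u :=
          (hycont x ⟨hx0, hx1.le⟩).eventually_const_lt hyx
        rw [eventually_nhdsWithin_iff] at hev
        rw [Metric.eventually_nhds_iff] at hev
        obtain ⟨δ, hδpos, hδ⟩ := hev
        refine ⟨δ, hδpos, fun u hu hxu hud => ?_⟩
        have hdist : dist u x < δ := by
          rw [Real.dist_eq, abs_of_nonneg (by linarith : (0:ℝ) ≤ u - x)]
          linarith
        exact (hδ hdist hu).le
    obtain ⟨δ, hδpos, hδ⟩ := hδ
    set c : ℝ := min (min b 1) (x + δ / 2) with hc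
    have hcx : x < c := by
      apply lt_min (lt_min hb hx1)
      linarith
    have hcb : c ≤ b := le_trans (min_le_left _ _) (min_le_left _ _)
    have hc1 : c ≤ 1 := le_trans (min_le_left _ _) (min_le_right _ _)
    have hcδ : c ≤ x + δ / 2 := min_le_right _ _
    have hc0 : 0 ≤ c := le_trans hx0 hcx.le
    have hpos : ∀ u ∈ Icc (0:ℝ) c, 0 ≤ y u := by
      intro u hu
      rcases le_or_gt u x with h | h
      · have := hxS u ⟨hu.1, h⟩
        linarith [hu.1]
      · exact hδ u ⟨hu.1, hu.2.trans hc1⟩ h (by linarith [hu.2])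
    have hcS : c ∈ S := fun u hu => keyA c ⟨hc0, hc1⟩ hpos u hu
    exact ⟨c, hcS, hcx, hcb⟩
  intro t ht
  have h1 : t ≤ y t := hsubset ht t ⟨ht.1, le_refl t⟩
  exact ⟨h1, fun h => lt_of_lt_of_le h h1⟩
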